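/- The greedy query tree T^g for π has cost at most C(T^g, π) ≤ 12 · C* · ln( 1 / min_{h∈H} π(h) ), where C* = min_T C(T, π) is the minimum cost over all query trees T whose leaves are H. In particular the approximation factor is independent of the question costs c_i. -/
import Mathlib


open Finset

namespace ActiveLearning

variable {H A : Type*} {m : ℕ}

/-- The total mass of a weight function `v` on a finite set `S`. -/
def mass (v : H → ℝ) (S : Finset H) : ℝ := ∑ s ∈ S, v s

/-- `v` restricted to `S` and normalized. -/
noncomputable def restrict [DecidableEq H] (v : H → ℝ) (S : Finset H) : H → ℝ :=
  fun h => if h ∈ S then v h / mass v S else 0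

/-- The shrinkage `Δ` of a question `qi` on `(S, v)`. -/
noncomputable def shrink [Fintype A] [DecidableEq A] (qi : H → A)
    (S : Finset H) (v : H → ℝ) : ℝ :=
  mass v S - ∑ j : A, (mass v (S.filter fun s => qi s = j)) ^ 2 / mass v S

/-- The collision probability of a distribution `v`. -/
def CP [Fintype H] (v : H → ℝ) : ℝ := ∑ z : H, (v z) ^ 2

/-- Query trees: internal nodes are questions (indexed by `Fin m`), branches are answers,
leaves are hypotheses. -/
inductive QTree (m : ℕ) (H A : Type*) : Type _
  | leaf : H → QTree m H A
  | node : Fin m → (A → QTree m H A) → QTree m H A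

/-- Follow the answers of hypothesis `h` down the tree, returning the leaf reached. -/
def follow (q : Fin m → H → A) : QTree m H A → H → H
  | .leaf h', _ => h'
  | .node i ch, h => follow q (ch (q i h)) h

/-- The cost `c_T(h)`: sum of costs of the questions on the root-to-`h` path. -/
def pathCost (q : Fin m → H → A) (c : Fin m → ℝ) : QTree m H A → H → ℝ
  | .leaf _, _ => 0
  | .node i ch, h => c i + pathCost q c (ch (q i h)) h

/-- The leaves of `T` include `S`: every `h ∈ S` is identified by `T`. -/
def ValidOn (q : Fin m → H → A) (T : QTree m H A) (S : Finset H) : Prop :=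
  ∀ h ∈ S, follow q T h = h

/-- The expected cost `C(T, v)` of a query tree `T` under weights `v`. -/
noncomputable def treeCost [Fintype H] (q : Fin m → H → A) (c : Fin m → ℝ)
    (T : QTree m H A) (v : H → ℝ) : ℝ :=
  ∑ h : H, v h * pathCost q c T h

/-- The questions asked along the root-to-`h` path. -/
def pathQs (q : Fin m → H → A) : QTree m H A → H → List (Fin m)
  | .leaf _, _ => []
  | .node i ch, h => i :: pathQs q (ch (q i h)) h

/-- `T` is a greedy query tree for `π` on version space `S`: at every node it asks a question
maximizing the shrinkage-cost ratio and recurses on each nonempty answer class. -/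
inductive IsGreedy [Fintype A] [DecidableEq A] [DecidableEq H]
    (q : Fin m → H → A) (c : Fin m → ℝ) (π : H → ℝ) :
    QTree m H A → Finset H → Prop
  | leaf (h : H) : IsGreedy q c π (.leaf h) {h}
  | node (S : Finset H) (i : Fin m) (ch : A → QTree m H A)
      (hcard : 1 < S.card)
      (hmax : ∀ j : Fin m,
        shrink (q j) S (restrict π S) / c j ≤ shrink (q i) S (restrict π S) / c i)
      (hch : ∀ a : A, (S.filter fun s => q i s = a).Nonempty →
        IsGreedy q c π (ch a) (S.filter fun s => q i s = a)) :
      IsGreedy q c π (.node i ch) S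

/-- `T` is an `ε`-approximate greedy query tree for `π` on version space `S`. -/
inductive IsApproxGreedy [Fintype A] [DecidableEq A] [DecidableEq H]
    (ε : ℝ) (q : Fin m → H → A) (c : Fin m → ℝ) (π : H → ℝ) :
    QTree m H A → Finset H → Prop
  | leaf (h : H) : IsApproxGreedy ε q c π (.leaf h) {h}
  | node (S : Finset H) (i : Fin m) (ch : A → QTree m H A)
      (hcard : 1 < S.card)
      (happrox : ∀ j : Fin m,
        (1 - ε) * (shrink (q j) S (restrict π S) / c j) ≤
          shrink (q i) S (restrict π S) / c i)
      (hch : ∀ a : A, (S.filter fun s => q i s = a).Nonempty →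
        IsApproxGreedy ε q c π (ch a) (S.filter fun s => q i s = a)) :
      IsApproxGreedy ε q c π (.node i ch) S

/-- `T` is irreducible on version space `S`: every asked question strictly splits the
surviving set. -/
inductive Irreducible [DecidableEq A] (q : Fin m → H → A) :
    QTree m H A → Finset H → Prop
  | leaf (h : H) (S : Finset H) : Irreducible q (.leaf h) S
  | node (S : Finset H) (i : Fin m) (ch : A → QTree m H A)
      (hsplit : ∃ s ∈ S, ∃ t ∈ S, q i s ≠ q i t)
      (hch : ∀ a : A, (S.filter fun s => q i s = a).Nonempty →
        Irreducible q (ch a) (S.filter fun s => q i s = a)) :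
      Irreducible q (.node i ch) S


section defs
variable [DecidableEq H] [DecidableEq A] [Fintype A]

/-- sum of squares of answer-class masses -/
noncomputable def Bsum (q : Fin m → H → A) (π : H → ℝ) (i : Fin m) (S : Finset H) : ℝ :=
  ∑ j : A, (mass π (S.filter fun s => q i s = j)) ^ 2

/-- unnormalized shrinkage -/
noncomputable def Dsh (q : Fin m → H → A) (π : H → ℝ) (i : Fin m) (S : Finset H) : ℝ :=
  mass π S - Bsum q π i S / mass π S

def Ksum (π : H → ℝ) (S : Finset H) : ℝ := ∑ h ∈ S, (π h) ^ 2

end defs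

section masslem
variable {π : H → ℝ}

lemma mass_nonneg (hπ : ∀ h, 0 ≤ π h) (S : Finset H) : 0 ≤ mass π S :=
  Finset.sum_nonneg fun h _ => hπ h

lemma mass_pos (hπ : ∀ h, 0 < π h) {S : Finset H} (hS : S.Nonempty) : 0 < mass π S :=
  Finset.sum_pos (fun h _ => hπ h) hS

lemma mass_mono (hπ : ∀ h, 0 ≤ π h) {S T : Finset H} (hST : S ⊆ T) :
    mass π S ≤ mass π T :=
  Finset.sum_le_sum_of_subset_of_nonneg hST fun h _ _ => hπ h

end masslem

section fiber
variable [DecidableEq H] [DecidableEq A] [Fintype A]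

lemma sum_fiber (q : Fin m → H → A) (i : Fin m) (S : Finset H) (F : A → H → ℝ) :
    ∑ j : A, ∑ h ∈ S.filter (fun s => q i s = j), F j h = ∑ h ∈ S, F (q i h) h := by
  rw [← Finset.sum_fiberwise_of_maps_to (t := (univ : Finset A))
    (fun h _ => Finset.mem_univ (q i h)) (fun h => F (q i h) h)]
  refine Finset.sum_congr rfl fun j _ => Finset.sum_congr rfl fun h hh => ?_
  rw [Finset.mem_filter] at hh
  rw [hh.2]

lemma mass_fiber (q : Fin m → H → A) (i : Fin m) (S : Finset H) (π : H → ℝ) :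
    ∑ j : A, mass π (S.filter fun s => q i s = j) = mass π S :=
  sum_fiber q i S (fun _ h => π h)

lemma Ksum_fiber (q : Fin m → H → A) (i : Fin m) (S : Finset H) (π : H → ℝ) :
    ∑ j : A, Ksum π (S.filter fun s => q i s = j) = Ksum π S :=
  sum_fiber q i S (fun _ h => (π h) ^ 2)

variable {π : H → ℝ}

lemma Bsum_le_sq (hπ : ∀ h, 0 ≤ π h) (q : Fin m → H → A) (i : Fin m) (S : Finset H) :
    Bsum q π i S ≤ (mass π S) ^ 2 := by
  rw [← mass_fiber q i S π]
  exact Finset.sum_sq_le_sq_sum_of_nonneg fun j _ =>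
    mass_nonneg hπ _

lemma le_Bsum (q : Fin m → H → A) (i : Fin m) (S : Finset H) (j : A) :
    (mass π (S.filter fun s => q i s = j)) ^ 2 ≤ Bsum q π i S :=
  Finset.single_le_sum (f := fun j => (mass π (S.filter fun s => q i s = j)) ^ 2)
    (fun j _ => sq_nonneg _) (Finset.mem_univ j)

lemma Dsh_nonneg (hπ : ∀ h, 0 < π h) (q : Fin m → H → A) (i : Fin m) (S : Finset H) :
    0 ≤ Dsh q π i S := by
  rcases S.eq_empty_or_nonempty with rfl | hS
  · simp [Dsh, Bsum, mass]
  · have h0 : 0 < mass π S := mass_pos hπ hS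
    have h2 := Bsum_le_sq (fun h => (hπ h).le) q i S
    rw [Dsh, sub_nonneg, div_le_iff₀ h0]
    nlinarith

end fiber


section mono
variable [DecidableEq H] [DecidableEq A] [Fintype A] {π : H → ℝ}

lemma Bsum_insert (q : Fin m → H → A) (i : Fin m) {S : Finset H} {x : H} (hx : x ∉ S) :
    Bsum q π i (insert x S) =
      Bsum q π i S + 2 * π x * mass π (S.filter fun s => q i s = q i x) + (π x) ^ 2 := by
  classical
  have key : ∀ j : A, mass π ((insert x S).filter fun s => q i s = j) =
      (if q i x = j then π x else 0) + mass π (S.filter fun s => q i s = j) := by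
    intro j
    by_cases hj : q i x = j
    · rw [Finset.filter_insert, if_pos hj, if_pos hj, mass,
        Finset.sum_insert (by simp [hx]), ← mass]
    · rw [Finset.filter_insert, if_neg hj, if_neg hj, zero_add]
  rw [Bsum, Bsum]
  have : ∀ j : A, (mass π ((insert x S).filter fun s => q i s = j)) ^ 2 =
      (mass π (S.filter fun s => q i s = j)) ^ 2 +
      (if q i x = j then 2 * π x * mass π (S.filter fun s => q i s = q i x) + (π x) ^ 2 else 0) := by
    intro j
    rw [key j]
    by_cases hj : q i x = j
    · subst hj; simp; ring
    · simp [hj]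
  rw [Finset.sum_congr rfl fun j _ => this j, Finset.sum_add_distrib,
    Finset.sum_ite_eq (Finset.univ : Finset A) (q i x)
      (fun _ => 2 * π x * mass π (S.filter fun s => q i s = q i x) + (π x) ^ 2)]
  simp [add_assoc]

lemma Dsh_insert_mono (hπ : ∀ h, 0 < π h) (q : Fin m → H → A) (i : Fin m)
    {S : Finset H} {x : H} (hx : x ∉ S) :
    Dsh q π i S ≤ Dsh q π i (insert x S) := by
  rcases S.eq_empty_or_nonempty with rfl | hS
  · rw [show insert x (∅ : Finset H) = {x} from rfl]
    refine le_trans (le_of_eq ?_) (Dsh_nonneg hπ q i {x})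
    simp [Dsh, Bsum, mass]
  · have hw : 0 < mass π S := mass_pos hπ hS
    have hp : 0 < π x := hπ x
    have hwx : mass π (insert x S) = π x + mass π S := by
      rw [mass, Finset.sum_insert hx]; rfl
    have hwx0 : 0 < mass π (insert x S) := by rw [hwx]; positivity
    set wa := mass π (S.filter fun s => q i s = q i x) with hwa
    have hwa0 : 0 ≤ wa := mass_nonneg (fun h => (hπ h).le) _
    have hwaw : wa ≤ mass π S := mass_mono (fun h => (hπ h).le) (Finset.filter_subset _ _)
    have hBa : wa ^ 2 ≤ Bsum q π i S := le_Bsum q i S (q i x)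
    rw [Dsh, Dsh, Bsum_insert q i hx, hwx]
    set w := mass π S
    set B := Bsum q π i S with hB
    set p := π x
    set u := B / w with hu
    set v := (B + 2 * p * wa + p ^ 2) / (p + w) with hv
    have hu' : u * w = B := div_mul_cancel₀ B (ne_of_gt hw)
    have hv' : v * (p + w) = B + 2 * p * wa + p ^ 2 :=
      div_mul_cancel₀ _ (by positivity)
    have h3 : 0 ≤ w + u - 2 * wa := by nlinarith [sq_nonneg (w - wa)]
    have hgoal : v ≤ p + u := by
      rw [hv, div_le_iff₀ (by positivity)]
      nlinarith [mul_le_mul_of_nonneg_left h3 hp.le]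
    linarith

lemma Dsh_union_mono (hπ : ∀ h, 0 < π h) (q : Fin m → H → A) (i : Fin m)
    (S : Finset H) (W : Finset H) :
    Dsh q π i S ≤ Dsh q π i (S ∪ W) := by
  classical
  induction W using Finset.induction_on with
  | empty => simp
  | @insert x W' hx ih =>
    rw [Finset.union_insert]
    by_cases hxs : x ∈ S ∪ W'
    · rw [Finset.insert_eq_self.2 hxs]; exact ih
    · exact le_trans ih (Dsh_insert_mono hπ q i hxs)

lemma Dsh_subset_mono (hπ : ∀ h, 0 < π h) (q : Fin m → H → A) (i : Fin m)
    {V S : Finset H} (hVS : V ⊆ S) :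
    Dsh q π i V ≤ Dsh q π i S := by
  have := Dsh_union_mono hπ q i V (S \ V)
  rwa [Finset.union_sdiff_of_subset hVS] at this

lemma mass_restrict (hπ : ∀ h, 0 < π h) {S : Finset H} (U : Finset H) (hU : U ⊆ S) :
    mass (restrict π S) U = mass π U / mass π S := by
  rw [mass, mass, Finset.sum_div]
  refine Finset.sum_congr rfl fun h hh => ?_
  rw [restrict, if_pos (hU hh)]

lemma shrink_eq_Dsh (hπ : ∀ h, 0 < π h) (q : Fin m → H → A) (i : Fin m)
    {S : Finset H} (hS : S.Nonempty) :
    shrink (q i) S (restrict π S) = Dsh q π i S / mass π S := by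
  have hw : 0 < mass π S := mass_pos hπ hS
  have h1 : mass (restrict π S) S = 1 := by
    rw [mass_restrict hπ S (le_refl _), div_self (ne_of_gt hw)]
  rw [shrink, h1, Dsh, sub_div, div_div]
  congr 1
  · rw [div_self (ne_of_gt hw)]
  · rw [Bsum, Finset.sum_div]
    refine Finset.sum_congr rfl fun j _ => ?_
    rw [mass_restrict hπ _ (Finset.filter_subset _ _), div_one, div_pow]
    ring

end mono

section key
variable [DecidableEq H] [DecidableEq A] [Fintype A]
variable {π : H → ℝ} {q : Fin m → H → A} {c : Fin m → ℝ}

/-- cost of tree T restricted to V (unnormalized) -/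
noncomputable def costOn (q : Fin m → H → A) (c : Fin m → ℝ) (π : H → ℝ)
    (T : QTree m H A) (V : Finset H) : ℝ :=
  ∑ h ∈ V, π h * pathCost q c T h

lemma pathCost_nonneg (hc : ∀ i, 0 ≤ c i) (T : QTree m H A) (h : H) :
    0 ≤ pathCost q c T h := by
  induction T with
  | leaf h' => simp [pathCost]
  | node i ch ih => rw [pathCost]; have := ih (q i h); have := hc i; linarith

lemma costOn_nonneg (hπ : ∀ h, 0 ≤ π h) (hc : ∀ i, 0 ≤ c i) (T : QTree m H A) (V : Finset H) :
    0 ≤ costOn q c π T V :=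
  Finset.sum_nonneg fun h _ => mul_nonneg (hπ h) (pathCost_nonneg hc T h)

lemma costOn_node (i : Fin m) (ch : A → QTree m H A) (V : Finset H) :
    costOn q c π (.node i ch) V =
      c i * mass π V + ∑ j : A, costOn q c π (ch j) (V.filter fun s => q i s = j) := by
  rw [costOn]
  have : ∀ h ∈ V, π h * pathCost q c (.node i ch) h =
      c i * π h + π h * pathCost q c (ch (q i h)) h := by
    intro h _; rw [pathCost]; ring
  rw [Finset.sum_congr rfl this, Finset.sum_add_distrib, ← Finset.mul_sum, ← mass]
  congr 1
  exact (sum_fiber q i V (fun j h => π h * pathCost q c (ch j) h)).symm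

lemma key_lemma (hπ : ∀ h, 0 < π h) {S : Finset H} {ρ : ℝ}
    (hρ : ∀ j, Dsh q π j S ≤ ρ * c j)
    (T : QTree m H A) :
    ∀ V : Finset H, V ⊆ S → ValidOn q T V →
      (mass π V) ^ 2 - Ksum π V ≤ ρ * costOn q c π T V := by
  induction T with
  | leaf h' =>
    intro V hVS hvalid
    have hV1 : V ⊆ {h'} := by
      intro h hh
      rw [Finset.mem_singleton]
      exact (hvalid h hh).symm
    rcases Finset.subset_singleton_iff.1 hV1 with rfl | rfl
    · simp [mass, Ksum, costOn]
    · simp [mass, Ksum, costOn, pathCost]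
  | node i ch ih =>
    intro V hVS hvalid
    have hvj : ∀ j : A, ValidOn q (ch j) (V.filter fun s => q i s = j) := by
      intro j h hh
      rw [Finset.mem_filter] at hh
      have h2 := hvalid h hh.1
      rw [follow, hh.2] at h2
      exact h2
    have hIH : ∀ j : A, (mass π (V.filter fun s => q i s = j)) ^ 2
        - Ksum π (V.filter fun s => q i s = j)
        ≤ ρ * costOn q c π (ch j) (V.filter fun s => q i s = j) := by
      intro j
      exact ih j _ (le_trans (Finset.filter_subset _ _) hVS) (hvj j)
    have hsum : Bsum q π i V - Ksum π V ≤
        ρ * ∑ j : A, costOn q c π (ch j) (V.filter fun s => q i s = j) := by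
      rw [Finset.mul_sum, Bsum, ← Ksum_fiber q i V π, ← Finset.sum_sub_distrib]
      exact Finset.sum_le_sum fun j _ => hIH j
    have hD : mass π V ^ 2 - Bsum q π i V ≤ mass π V * (ρ * c i) := by
      rcases V.eq_empty_or_nonempty with rfl | hV
      · simp [mass, Bsum]
      · have hw : 0 < mass π V := mass_pos hπ hV
        have h1 : Dsh q π i V ≤ ρ * c i :=
          le_trans (Dsh_subset_mono hπ q i hVS) (hρ i)
        have h2 : mass π V * Dsh q π i V = mass π V ^ 2 - Bsum q π i V := by
          rw [Dsh, mul_sub, mul_div_cancel₀ _ (ne_of_gt hw), sq]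
        rw [← h2]
        exact mul_le_mul_of_nonneg_left h1 hw.le
    rw [costOn_node, mul_add]
    have : mass π V ^ 2 - Ksum π V =
        (mass π V ^ 2 - Bsum q π i V) + (Bsum q π i V - Ksum π V) := by ring
    rw [this]
    refine add_le_add (le_trans hD (le_of_eq (by ring))) hsum

end key

section pot
variable [DecidableEq H] {π : H → ℝ}

noncomputable def Mx (π : H → ℝ) (S : Finset H) : ℝ :=
  if h : S.Nonempty then S.sup' h π else 0

noncomputable def Phi (π : H → ℝ) (μ : ℝ) (S : Finset H) : ℝ :=
  if 2 ≤ S.card then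
    4 * Real.log (mass π S / μ) + 2 * Real.log ((mass π S - Mx π S) / μ) else 0

lemma Mx_spec {S : Finset H} (hS : S.Nonempty) :
    ∃ z ∈ S, Mx π S = π z ∧ ∀ h ∈ S, π h ≤ Mx π S := by
  rw [Mx, dif_pos hS]
  obtain ⟨z, hz, he⟩ := Finset.exists_mem_eq_sup' hS π
  exact ⟨z, hz, he, fun h hh => he ▸ (he ▸ Finset.le_sup' π hh)⟩

lemma mass_erase {S : Finset H} {z : H} (hz : z ∈ S) :
    mass π (S.erase z) = mass π S - π z := by
  rw [mass, mass, Finset.sum_erase_eq_sub hz]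

lemma mu_le_mass_erase {μ : ℝ} (hμ : ∀ h, μ ≤ π h) {S : Finset H} {z : H}
    (hz : z ∈ S) (hcard : 2 ≤ S.card) (hπ : ∀ h, 0 < π h) :
    μ ≤ mass π (S.erase z) := by
  have hne : (S.erase z).Nonempty := by
    rw [← Finset.card_pos, Finset.card_erase_of_mem hz]
    omega
  obtain ⟨y, hy⟩ := hne
  calc μ ≤ π y := hμ y
    _ ≤ mass π (S.erase z) :=
      Finset.single_le_sum (fun h _ => (hπ h).le) hy

end pot

section corelog

lemma log_ge_one_sub_inv {x : ℝ} (hx : 0 < x) : 1 - 1 / x ≤ Real.log x := by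
  have h := Real.log_le_sub_one_of_pos (x := 1 / x) (by positivity)
  rw [Real.log_div one_ne_zero (ne_of_gt hx), Real.log_one] at h
  linarith

lemma coreA {g w mm wj mj : ℝ} (hm : 0 < mm) (hmj : 0 < mj) (hwj : 0 < wj)
    (hwjw : wj ≤ w) (hkey : w - wj ≤ mm - mj) (hg : g ≤ 2 * (w - wj) / mm) :
    g ≤ 4 * Real.log (w / wj) + 2 * Real.log (mm / mj) := by
  have h1 : 1 - mj / mm ≤ Real.log (mm / mj) := by
    have := log_ge_one_sub_inv (x := mm / mj) (by positivity)
    rwa [one_div_div] at this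
  have h2 : 0 ≤ Real.log (w / wj) :=
    Real.log_nonneg ((one_le_div hwj).2 hwjw)
  have h3 : 2 * (w - wj) / mm ≤ 2 * (mm - mj) / mm := by
    gcongr
  have h4 : 2 * (mm - mj) / mm = 2 * (1 - mj / mm) := by
    field_simp
  linarith

lemma coreB {g w mm wj : ℝ} (hwj : 0 < wj) (hwjm : wj ≤ mm) (hm : 0 < mm)
    (hmw : mm ≤ w) (hg2 : g ≤ 2) (hgj : g ≤ 2 * (w - wj) / mm) :
    g ≤ 4 * Real.log (w / wj) := by
  have hw : 0 < w := lt_of_lt_of_le hm hmw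
  by_cases hcase : 2 * mm ≤ w
  · have h1 : (2 : ℝ) ≤ w / wj := by
      rw [le_div_iff₀ hwj]; linarith
    have h2 : Real.log 2 ≤ Real.log (w / wj) := Real.log_le_log (by norm_num) h1
    have h3 := Real.log_two_gt_d9
    linarith
  · push_neg at hcase
    have h1 : 2 * (w - wj) / mm ≤ 4 * (w - wj) / w := by
      rw [div_le_div_iff₀ hm hw]
      nlinarith
    have h2 : 1 - wj / w ≤ Real.log (w / wj) := by
      have := log_ge_one_sub_inv (x := w / wj) (by positivity)
      rwa [one_div_div] at this
    have h3 : 4 * (w - wj) / w = 4 * (1 - wj / w) := by field_simp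
    linarith

end corelog

section main
variable [DecidableEq H] [DecidableEq A] [Fintype A]
variable {π : H → ℝ} {q : Fin m → H → A} {c : Fin m → ℝ}

set_option maxHeartbeats 1000000 in
lemma greedy_main (hπ : ∀ h, 0 < π h) (hc : ∀ i, 0 < c i)
    {μ : ℝ} (hμ0 : 0 < μ) (hμ : ∀ h, μ ≤ π h)
    (T : QTree m H A)
    {Tg : QTree m H A} {S : Finset H} (hTg : IsGreedy q c π Tg S) :
    ValidOn q T S → costOn q c π Tg S ≤ costOn q c π T S * Phi π μ S := by
  induction hTg with
  | leaf h =>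
    intro _
    have h1 : costOn q c π (.leaf h) {h} = 0 := by simp [costOn, pathCost]
    have h2 : Phi π μ ({h} : Finset H) = 0 := by rw [Phi, if_neg (by simp)]
    rw [h1, h2, mul_zero]
  | node S i ch hcard hmax hch ih =>
    intro hTv
    have hcard2 : 2 ≤ S.card := hcard
    have hS : S.Nonempty := Finset.card_pos.1 (by omega)
    set w := mass π S with hw_def
    have hw : 0 < w := mass_pos hπ hS
    obtain ⟨z, hzS, hzM, hzmax⟩ := Mx_spec (π := π) hS
    set M := Mx π S with hM_def
    have hM0 : 0 < M := by rw [hzM]; exact hπ z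
    have hMμ : μ ≤ M := by rw [hzM]; exact hμ z
    set mm := w - M with hmm_def
    have hmm_eq : mass π (S.erase z) = mm := by
      rw [mass_erase hzS, hmm_def, hzM]
    have hmmμ : μ ≤ mm := hmm_eq ▸ mu_le_mass_erase hμ hzS hcard2 hπ
    have hmm0 : 0 < mm := lt_of_lt_of_le hμ0 hmmμ
    have hKM : Ksum π S ≤ M * w := by
      rw [Ksum, hw_def, mass, Finset.mul_sum]
      refine Finset.sum_le_sum fun h hh => ?_
      have h1 := hzmax h hh
      nlinarith [(hπ h).le]
    have hwmK : w * mm ≤ w ^ 2 - Ksum π S := by rw [hmm_def]; nlinarith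
    have hwK : 0 < w ^ 2 - Ksum π S := lt_of_lt_of_le (by positivity) hwmK
    -- the greedy question has near-optimal unnormalized shrink/cost ratio
    have hρ : ∀ j, Dsh q π j S ≤ (Dsh q π i S / c i) * c j := by
      intro j
      have h1 := hmax j
      rw [shrink_eq_Dsh hπ q j hS, shrink_eq_Dsh hπ q i hS] at h1
      rw [div_div, div_div,
        div_le_div_iff₀ (mul_pos hw (hc j)) (mul_pos hw (hc i))] at h1
      rw [div_mul_eq_mul_div, le_div_iff₀ (hc i)]
      nlinarith [h1]
    have hkeyT := key_lemma hπ hρ T S (Finset.Subset.refl S) hTv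
    set CS := costOn q c π T S with hCS_def
    have hCS0 : 0 ≤ CS :=
      costOn_nonneg (fun h => (hπ h).le) (fun i => (hc i).le) T S
    set B := Bsum q π i S with hB_def
    have hB0 : B ≤ w ^ 2 := Bsum_le_sq (fun h => (hπ h).le) q i S
    set g := (w ^ 2 - B) / (w ^ 2 - Ksum π S) with hg_def
    have hciw : c i * w ≤ CS * g := by
      have h1 : c i * (w ^ 2 - Ksum π S) ≤ Dsh q π i S * CS := by
        calc c i * (w ^ 2 - Ksum π S) ≤ c i * (Dsh q π i S / c i * CS) :=
              mul_le_mul_of_nonneg_left hkeyT (hc i).le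
          _ = Dsh q π i S * CS := by field_simp [(hc i).ne']
      have h2 : Dsh q π i S * w = w ^ 2 - B := by
        rw [Dsh, sub_mul, div_mul_cancel₀ _ hw.ne', ← hw_def, ← hB_def, sq]
      rw [hg_def, ← mul_div_assoc, le_div_iff₀ hwK]
      nlinarith [mul_le_mul_of_nonneg_right h1 hw.le]
    -- g is at most 2
    have hwa_le : w - mass π (S.filter fun s => q i s = q i z) ≤ mm := by
      have hsplit : mass π (S.filter fun s => q i s = q i z) +
          mass π (S.filter fun s => ¬ q i s = q i z) = w := by
        rw [hw_def, mass, mass, mass]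
        exact Finset.sum_filter_add_sum_filter_not S _ _
      have hsub : (S.filter fun s => ¬ q i s = q i z) ⊆ S.erase z := by
        intro h hh
        rw [Finset.mem_filter] at hh
        rw [Finset.mem_erase]
        exact ⟨fun he => hh.2 (by rw [he]), hh.1⟩
      have h3 := mass_mono (fun h => (hπ h).le) hsub
      rw [hmm_eq] at h3
      linarith
    have hgj : ∀ j : A, g ≤ 2 * (w - mass π (S.filter fun s => q i s = j)) / mm := by
      intro j
      have hBj : (mass π (S.filter fun s => q i s = j)) ^ 2 ≤ B := le_Bsum q i S j
      have hwj_w : mass π (S.filter fun s => q i s = j) ≤ w :=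
        mass_mono (fun h => (hπ h).le) (Finset.filter_subset _ _)
      have hwj0 : 0 ≤ mass π (S.filter fun s => q i s = j) :=
        mass_nonneg (fun h => (hπ h).le) _
      have h1 : w ^ 2 - B ≤ 2 * w * (w - mass π (S.filter fun s => q i s = j)) := by
        nlinarith
      rw [hg_def, div_le_div_iff₀ hwK hmm0]
      nlinarith [mul_le_mul_of_nonneg_right h1 hmm0.le,
        mul_le_mul_of_nonneg_left hwmK
          (by linarith : (0:ℝ) ≤ 2 * (w - mass π (S.filter fun s => q i s = j)))]
    have hg2 : g ≤ 2 := by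
      have h1 := hgj (q i z)
      have h2 : 2 * (w - mass π (S.filter fun s => q i s = q i z)) / mm ≤ 2 := by
        rw [div_le_iff₀ hmm0]
        linarith
      linarith
    have hPhiS : Phi π μ S = 4 * Real.log (w / μ) + 2 * Real.log (mm / μ) := by
      rw [Phi, if_pos hcard2, ← hw_def, ← hM_def, ← hmm_def]
    -- the potential drops by at least g on every nonempty child
    have hgap : ∀ j : A, (S.filter fun s => q i s = j).Nonempty →
        Phi π μ (S.filter fun s => q i s = j) ≤ Phi π μ S - g := by
      intro j hne
      set Sj := S.filter (fun s => q i s = j) with hSj_def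
      set wj := mass π Sj with hwj_def
      have hwj0 : 0 < wj := mass_pos hπ hne
      have hwj_w : wj ≤ w :=
        mass_mono (fun h => (hπ h).le) (Finset.filter_subset _ _)
      have hgj' := hgj j
      rw [hPhiS]
      have hlog1 : ∀ x : ℝ, 0 < x → x ≤ w →
          Real.log (w / μ) - Real.log (x / μ) = Real.log (w / x) := by
        intro x hx _
        rw [Real.log_div hw.ne' hμ0.ne', Real.log_div hx.ne' hμ0.ne',
          Real.log_div hw.ne' hx.ne']
        ring
      have hlog2 : ∀ x : ℝ, 0 < x → x ≤ mm →
          Real.log (mm / μ) - Real.log (x / μ) = Real.log (mm / x) := by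
        intro x hx _
        rw [Real.log_div hmm0.ne' hμ0.ne', Real.log_div hx.ne' hμ0.ne',
          Real.log_div hmm0.ne' hx.ne']
        ring
      by_cases hc2 : 2 ≤ Sj.card
      · obtain ⟨zj, hzjS, hzjM, hzjmax⟩ := Mx_spec (π := π) hne
        set Mj := Mx π Sj with hMj_def
        set mj := wj - Mj with hmj_def
        have hMj0 : 0 < Mj := by rw [hzjM]; exact hπ zj
        have hmj_eq : mass π (Sj.erase zj) = mj := by
          rw [mass_erase hzjS, hmj_def, hzjM, hwj_def]
        have hmjμ : μ ≤ mj := hmj_eq ▸ mu_le_mass_erase hμ hzjS hc2 hπ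
        have hmj0 : 0 < mj := lt_of_lt_of_le hμ0 hmjμ
        have hzjSS : zj ∈ S := Finset.filter_subset _ _ hzjS
        have hPhiSj : Phi π μ Sj = 4 * Real.log (wj / μ) + 2 * Real.log (mj / μ) := by
          rw [Phi, if_pos hc2, ← hwj_def, ← hMj_def, ← hmj_def]
        rw [hPhiSj]
        by_cases hz : z ∈ Sj
        · -- heavy child: w - wj = mm - mj
          have hMjM : Mj = M := by
            have h1 : Mj ≤ M := by rw [hzjM]; exact (hM_def ▸ hzmax zj hzjSS)
            have h2 : M ≤ Mj := by rw [hzM]; exact hzjmax z hz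
            linarith
          have hmjm : mj ≤ mm := by rw [hmj_def, hmm_def, hMjM]; linarith
          have hkey2 : w - wj ≤ mm - mj := by
            rw [hmj_def, hmm_def, hMjM]; ring_nf; linarith
          have h4 := coreA hmm0 hmj0 hwj0 hwj_w hkey2 hgj'
          have e1 := hlog1 wj hwj0 hwj_w
          have e2 := hlog2 mj hmj0 hmjm
          linarith
        · -- light child: wj ≤ mm
          have hsub : Sj ⊆ S.erase z := by
            intro h hh
            rw [Finset.mem_erase]
            exact ⟨fun he => hz (he ▸ hh), Finset.filter_subset _ _ hh⟩
          have hwjm : wj ≤ mm := by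
            have := mass_mono (fun h => (hπ h).le) hsub
            rwa [hmm_eq] at this
          have hmjm : mj ≤ mm := by rw [hmj_def]; linarith
          have h4 := coreB hwj0 hwjm hmm0 (by linarith) hg2 hgj'
          have h5 : 0 ≤ Real.log (mm / mj) :=
            Real.log_nonneg ((one_le_div hmj0).2 hmjm)
          have e1 := hlog1 wj hwj0 hwj_w
          have e2 := hlog2 mj hmj0 hmjm
          have h6 : 0 ≤ Real.log (w / wj) :=
            Real.log_nonneg ((one_le_div hwj0).2 hwj_w)
          linarith
      · -- singleton child
        have hPhiSj : Phi π μ Sj = 0 := by rw [Phi, if_neg hc2]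
        rw [hPhiSj]
        have hgj'' : g ≤ 2 * (w - μ) / mm := by
          have h2 : (2:ℝ) ≤ 2 * (w - μ) / mm := by
            rw [le_div_iff₀ hmm0]
            linarith
          linarith
        have h4 := coreB hμ0 hmmμ hmm0 (by linarith) hg2 hgj''
        have h5 : 0 ≤ Real.log (mm / μ) :=
          Real.log_nonneg ((one_le_div hμ0).2 hmmμ)
        linarith
    -- assemble
    have hch_bound : ∀ j : A,
        costOn q c π (ch j) (S.filter fun s => q i s = j) ≤
        costOn q c π T (S.filter fun s => q i s = j) * (Phi π μ S - g) := by
      intro j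
      rcases (S.filter fun s => q i s = j).eq_empty_or_nonempty with he | hne
      · rw [he]
        simp [costOn]
      · have hTvj : ValidOn q T (S.filter fun s => q i s = j) :=
          fun h hh => hTv h (Finset.filter_subset _ _ hh)
        calc costOn q c π (ch j) (S.filter fun s => q i s = j)
            ≤ costOn q c π T (S.filter fun s => q i s = j) *
              Phi π μ (S.filter fun s => q i s = j) := ih j hne hTvj
          _ ≤ costOn q c π T (S.filter fun s => q i s = j) * (Phi π μ S - g) :=
              mul_le_mul_of_nonneg_left (hgap j hne)
                (costOn_nonneg (fun h => (hπ h).le) (fun i => (hc i).le) T _)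
    have hsplitC : ∑ j : A, costOn q c π T (S.filter fun s => q i s = j) = CS := by
      rw [hCS_def]
      simp only [costOn]
      exact sum_fiber q i S (fun _ h => π h * pathCost q c T h)
    calc costOn q c π (.node i ch) S
        = c i * w + ∑ j : A, costOn q c π (ch j) (S.filter fun s => q i s = j) := by
          rw [costOn_node, hw_def]
      _ ≤ CS * g + ∑ j : A, costOn q c π T (S.filter fun s => q i s = j) *
            (Phi π μ S - g) :=
          add_le_add hciw (Finset.sum_le_sum fun j _ => hch_bound j)
      _ = CS * g + CS * (Phi π μ S - g) := by rw [← Finset.sum_mul, hsplitC]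
      _ = CS * Phi π μ S := by ring

end main

/-- The greedy query tree `T^g` for `π` has cost at most
`C(T^g, π) ≤ 12 · C* · ln( 1 / min_{h∈H} π(h) )`, where `C*` is the minimum cost over all
query trees whose leaves are `H` (formalized: the bound holds against every such tree). -/
theorem greedy_cost_bound [Fintype H] [Nonempty H] [Fintype A] [DecidableEq H] [DecidableEq A]
    (π : H → ℝ) (hπpos : ∀ h, 0 < π h) (hπsum : ∑ h : H, π h = 1)
    (hH : 1 < Fintype.card H)
    (q : Fin m → H → A) (c : Fin m → ℝ) (hc : ∀ i, 0 < c i)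
    (hdist : ∀ h h' : H, h ≠ h' → ∃ i : Fin m, q i h ≠ q i h')
    (Tg : QTree m H A) (hTg : IsGreedy q c π Tg Finset.univ) :
    ∀ T : QTree m H A, ValidOn q T Finset.univ →
      treeCost q c Tg π ≤
        12 * treeCost q c T π *
          Real.log (1 / Finset.univ.inf' Finset.univ_nonempty π) := by
  intro T hT
  set μ := Finset.univ.inf' Finset.univ_nonempty π with hμ_def
  have hμle : ∀ h, μ ≤ π h := fun h => Finset.inf'_le π (Finset.mem_univ h)
  have hμ0 : 0 < μ := by
    obtain ⟨h0, _, he⟩ := Finset.exists_mem_eq_inf' (Finset.univ_nonempty (α := H)) π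
    rw [hμ_def, he]
    exact hπpos h0
  have hmass1 : mass π (Finset.univ : Finset H) = 1 := hπsum
  have hcard2 : 2 ≤ (Finset.univ : Finset H).card := by
    rw [Finset.card_univ]; omega
  have huniv : (Finset.univ : Finset H).Nonempty := Finset.univ_nonempty
  have hmain := greedy_main hπpos hc hμ0 hμle T hTg hT
  have hTgEq : treeCost q c Tg π = costOn q c π Tg Finset.univ := rfl
  have hTEq : treeCost q c T π = costOn q c π T Finset.univ := rfl
  obtain ⟨z, hzS, hzM, hzmax⟩ := Mx_spec (π := π) huniv
  have hM0 : 0 < Mx π Finset.univ := by rw [hzM]; exact hπpos z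
  have hmm_eq : mass π (Finset.univ.erase z) = 1 - Mx π Finset.univ := by
    rw [mass_erase hzS, hmass1, hzM]
  have hmmμ : μ ≤ 1 - Mx π Finset.univ :=
    hmm_eq ▸ mu_le_mass_erase hμle hzS hcard2 hπpos
  have hmm1 : 1 - Mx π Finset.univ ≤ 1 := by linarith
  have hμ1 : μ ≤ 1 := le_trans hmmμ hmm1
  have hlog0 : 0 ≤ Real.log (1 / μ) := by
    apply Real.log_nonneg
    rw [le_div_iff₀ hμ0]
    linarith
  have hPhi : Phi π μ Finset.univ ≤ 12 * Real.log (1 / μ) := by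
    rw [Phi, if_pos hcard2, hmass1]
    have h1 : Real.log ((1 - Mx π Finset.univ) / μ) ≤ Real.log (1 / μ) := by
      apply Real.log_le_log (div_pos (by linarith) hμ0)
      gcongr
      all_goals linarith
    linarith [hlog0]
  have hT0 : 0 ≤ treeCost q c T π := by
    rw [hTEq]
    exact costOn_nonneg (fun h => (hπpos h).le) (fun i => (hc i).le) T _
  calc treeCost q c Tg π ≤ treeCost q c T π * Phi π μ Finset.univ := by
        rw [hTgEq, hTEq]; exact hmain
    _ ≤ treeCost q c T π * (12 * Real.log (1 / μ)) :=
        mul_le_mul_of_nonneg_left hPhi hT0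
    _ = 12 * treeCost q c T π * Real.log (1 / μ) := by ring

end ActiveLearning
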